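/- For a fixed dyadic box R' ⊆ [0,1]^d of measure 2^{k-m} (with 0 ≤ k ≤ m) and a fixed point x ∈ R', the number of dyadic boxes R of measure 2^{-m} with R ⊆ R' and x ∈ R equals C(k+d-1, d-1). -/

import Mathlib

open Finset

/-- The dyadic box in `[0,1]^d` whose `i`-th factor is the dyadic interval
`[jj i / 2^{ℓ i}, (jj i + 1) / 2^{ℓ i})`. -/
def dyadicBox (d : ℕ) (ℓ jj : Fin d → ℕ) : Set (Fin d → ℝ) :=
  {x | ∀ i, (jj i : ℝ) / 2 ^ ℓ i ≤ x i ∧ x i < ((jj i : ℝ) + 1) / 2 ^ ℓ i}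

/-- Key one-dimensional lemma: if `x` lies in the dyadic interval of level `ℓ'` indexed by `jj'`,
and `ℓ' ≤ ℓ`, then `n = ⌊x * 2^ℓ⌋₊` indexes the unique dyadic interval of level `ℓ` containing
`x`, and this interval is contained in the level-`ℓ'` interval. -/
lemma dyadic_floor_mem {x : ℝ} {ℓ' ℓ jj' : ℕ} (hjj' : jj' < 2 ^ ℓ')
    (h1 : (jj' : ℝ) / 2 ^ ℓ' ≤ x) (h2 : x < ((jj' : ℝ) + 1) / 2 ^ ℓ') (hℓ : ℓ' ≤ ℓ) :
    ⌊x * 2 ^ ℓ⌋₊ < 2 ^ ℓ ∧ ((⌊x * 2 ^ ℓ⌋₊ : ℝ) / 2 ^ ℓ ≤ x ∧ x < ((⌊x * 2 ^ ℓ⌋₊ : ℝ) + 1) / 2 ^ ℓ) ∧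
    (jj' : ℝ) / 2 ^ ℓ' ≤ (⌊x * 2 ^ ℓ⌋₊ : ℝ) / 2 ^ ℓ ∧
    ((⌊x * 2 ^ ℓ⌋₊ : ℝ) + 1) / 2 ^ ℓ ≤ ((jj' : ℝ) + 1) / 2 ^ ℓ' := by
  have hP : (0:ℝ) < 2 ^ ℓ := by positivity
  have hP' : (0:ℝ) < 2 ^ ℓ' := by positivity
  have hx0 : 0 ≤ x := le_trans (by positivity) h1
  have hx0' : 0 ≤ x * 2 ^ ℓ := by positivity
  set n := ⌊x * 2 ^ ℓ⌋₊ with hn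
  have hfl : (n : ℝ) ≤ x * 2 ^ ℓ := Nat.floor_le hx0'
  have hfl2 : x * 2 ^ ℓ < (n : ℝ) + 1 := Nat.lt_floor_add_one _
  have hpow : (2:ℝ) ^ ℓ = 2 ^ (ℓ - ℓ') * 2 ^ ℓ' := by
    rw [← pow_add]; congr 1; omega
  -- x < 1
  have hx1 : x < 1 := by
    have : ((jj' : ℝ) + 1) ≤ 2 ^ ℓ' := by
      have : (jj' : ℝ) + 1 ≤ ((2 ^ ℓ' : ℕ) : ℝ) := by exact_mod_cast hjj'
      simpa using this
    calc x < ((jj' : ℝ) + 1) / 2 ^ ℓ' := h2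
      _ ≤ 1 := by rw [div_le_one hP']; exact this
  constructor
  · have : (n : ℝ) < 2 ^ ℓ := lt_of_le_of_lt hfl (by nlinarith)
    exact_mod_cast this
  refine ⟨⟨by rw [div_le_iff₀ hP]; exact hfl, by rw [lt_div_iff₀ hP]; exact hfl2⟩, ?_, ?_⟩
  · -- left endpoint
    have key : (jj' : ℝ) * 2 ^ (ℓ - ℓ') ≤ n := by
      have h : ((jj' * 2 ^ (ℓ - ℓ') : ℕ) : ℝ) ≤ x * 2 ^ ℓ := by
        push_cast
        rw [hpow]
        calc (jj' : ℝ) * 2 ^ (ℓ - ℓ') = (jj' : ℝ) / 2 ^ ℓ' * (2 ^ (ℓ - ℓ') * 2 ^ ℓ') := by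
              field_simp
          _ ≤ x * (2 ^ (ℓ - ℓ') * 2 ^ ℓ') := by
              apply mul_le_mul_of_nonneg_right h1; positivity
      have h2 : jj' * 2 ^ (ℓ - ℓ') ≤ n := Nat.le_floor h
      exact_mod_cast h2
    rw [div_le_div_iff₀ hP' hP, hpow]
    nlinarith [key, (by positivity : (0:ℝ) < 2 ^ (ℓ - ℓ'))]
  · -- right endpoint
    have key : (n : ℝ) + 1 ≤ ((jj' : ℝ) + 1) * 2 ^ (ℓ - ℓ') := by
      have h : x * 2 ^ ℓ < (((jj' + 1) * 2 ^ (ℓ - ℓ') : ℕ) : ℝ) := by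
        push_cast
        rw [hpow]
        calc x * (2 ^ (ℓ - ℓ') * 2 ^ ℓ')
            < ((jj' : ℝ) + 1) / 2 ^ ℓ' * (2 ^ (ℓ - ℓ') * 2 ^ ℓ') := by
              apply mul_lt_mul_of_pos_right h2; positivity
          _ = ((jj' : ℝ) + 1) * 2 ^ (ℓ - ℓ') := by field_simp
      have hlt : n < (jj' + 1) * 2 ^ (ℓ - ℓ') := Nat.floor_lt hx0' |>.mpr h
      have : n + 1 ≤ (jj' + 1) * 2 ^ (ℓ - ℓ') := hlt
      exact_mod_cast this
    rw [div_le_div_iff₀ hP hP', hpow]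
    nlinarith [key, (by positivity : (0:ℝ) < 2 ^ (ℓ - ℓ')), hP']

/-- If a dyadic interval of level `ℓ` meets and maps into the dyadic interval of level `ℓ'`
(in the sense of the box containment plus a common point), then `ℓ' ≤ ℓ`. -/
lemma dyadic_level_le {ℓ' ℓ jj' jj : ℕ}
    (hL : (jj' : ℝ) / 2 ^ ℓ' ≤ (jj : ℝ) / 2 ^ ℓ)
    (hR : ((jj : ℝ) + 1) / 2 ^ ℓ ≤ ((jj' : ℝ) + 1) / 2 ^ ℓ') : ℓ' ≤ ℓ := by
  have hP : (0:ℝ) < 2 ^ ℓ := by positivity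
  have hP' : (0:ℝ) < 2 ^ ℓ' := by positivity
  by_contra h
  push_neg at h
  have hlt : (2:ℝ) ^ ℓ < 2 ^ ℓ' := by
    apply pow_lt_pow_right₀ (by norm_num) h
  have h1 : ((jj : ℝ) + 1) / 2 ^ ℓ - (jj : ℝ) / 2 ^ ℓ = 1 / 2 ^ ℓ := by field_simp; ring
  have h2 : ((jj' : ℝ) + 1) / 2 ^ ℓ' - (jj' : ℝ) / 2 ^ ℓ' = 1 / 2 ^ ℓ' := by field_simp; ring
  have : (1:ℝ) / 2 ^ ℓ ≤ 1 / 2 ^ ℓ' := by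
    rw [← h1, ← h2]; linarith
  rw [div_le_div_iff₀ hP hP'] at this
  nlinarith

lemma nat_sum_card (d k : ℕ) (hd : 1 ≤ d) :
    Nat.card {f : Fin d → ℕ // ∑ i, f i = k} = (k + d - 1).choose (d - 1) := by
  rw [Nat.card_congr (Sym.equivNatSumOfFintype (Fin d) k).symm, Nat.card_eq_fintype_card,
    Sym.card_sym_eq_choose]
  rw [Fintype.card_fin]
  have h1 : k ≤ d + k - 1 := by omega
  have h2 : d + k - 1 - k = d - 1 := by omega
  rw [← Nat.choose_symm h1, h2]
  congr 1
  omega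

/-- For a fixed dyadic box `R'` of measure `2^{k-m}` and a fixed `x ∈ R'`, the number of
dyadic boxes of measure `2^{-m}` contained in `R'` and containing `x` is `C(k+d-1, d-1)`. -/
theorem stmt13 (d m k : ℕ) (hd : 1 ≤ d) (hkm : k ≤ m)
    (ℓ' jj' : Fin d → ℕ) (hsum' : ∑ i, ℓ' i = m - k) (hjj' : ∀ i, jj' i < 2 ^ ℓ' i)
    (x : Fin d → ℝ) (hx : x ∈ dyadicBox d ℓ' jj') :
    Nat.card {b : (Fin d → ℕ) × (Fin d → ℕ) //
        (∑ i, b.1 i) = m ∧ (∀ i, b.2 i < 2 ^ b.1 i) ∧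
        dyadicBox d b.1 b.2 ⊆ dyadicBox d ℓ' jj' ∧ x ∈ dyadicBox d b.1 b.2}
      = (k + d - 1).choose (d - 1) := by
  -- Every admissible box has levels at least ℓ'
  have level_ge : ∀ (ℓ jj : Fin d → ℕ),
      dyadicBox d ℓ jj ⊆ dyadicBox d ℓ' jj' → x ∈ dyadicBox d ℓ jj → ∀ i, ℓ' i ≤ ℓ i := by
    intro ℓ jj hsub hxb i
    have hP : (0:ℝ) < 2 ^ ℓ i := by positivity
    -- left endpoint in the big box
    have hL : (jj' i : ℝ) / 2 ^ ℓ' i ≤ (jj i : ℝ) / 2 ^ ℓ i := by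
      have hy : Function.update x i ((jj i : ℝ) / 2 ^ ℓ i) ∈ dyadicBox d ℓ jj := by
        intro i'
        rcases eq_or_ne i' i with rfl | hne
        · simp only [Function.update_self]
          constructor
          · exact le_refl _
          · rw [div_lt_div_iff₀ hP hP]; nlinarith
        · rw [Function.update_of_ne hne]; exact hxb i'
      have := hsub hy i
      simpa using this.1
    -- right endpoint bound
    have hR : ((jj i : ℝ) + 1) / 2 ^ ℓ i ≤ ((jj' i : ℝ) + 1) / 2 ^ ℓ' i := by
      by_contra h
      push_neg at h
      set t : ℝ := max (x i) (((jj' i : ℝ) + 1) / 2 ^ ℓ' i) with ht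
      have hy : Function.update x i t ∈ dyadicBox d ℓ jj := by
        intro i'
        rcases eq_or_ne i' i with rfl | hne
        · simp only [Function.update_self]
          constructor
          · exact le_trans (hxb _).1 (le_max_left _ _)
          · exact max_lt (hxb _).2 h
        · rw [Function.update_of_ne hne]; exact hxb i'
      have := hsub hy i
      have h2 := this.2
      simp only [Function.update_self] at h2
      exact absurd h2 (not_lt.mpr (le_max_right _ _))
    exact dyadic_level_le hL hR
  -- jj is determined by the levels
  have jj_det : ∀ (ℓ jj : Fin d → ℕ), x ∈ dyadicBox d ℓ jj → ∀ i, jj i = ⌊x i * 2 ^ ℓ i⌋₊ := by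
    intro ℓ jj hxb i
    have hP : (0:ℝ) < 2 ^ ℓ i := by positivity
    have h1 : (jj i : ℝ) ≤ x i * 2 ^ ℓ i := by
      rw [← div_le_iff₀ hP]; exact (hxb i).1
    have h2 : x i * 2 ^ ℓ i < (jj i : ℝ) + 1 := by
      rw [← lt_div_iff₀ hP]; exact (hxb i).2
    have hx0 : (0:ℝ) ≤ x i * 2 ^ ℓ i := le_trans (by positivity) h1
    symm
    rw [Nat.floor_eq_iff (by exact_mod_cast hx0)]
    exact ⟨h1, by exact_mod_cast h2⟩
  -- the equivalence with compositions of k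
  have e : {b : (Fin d → ℕ) × (Fin d → ℕ) //
        (∑ i, b.1 i) = m ∧ (∀ i, b.2 i < 2 ^ b.1 i) ∧
        dyadicBox d b.1 b.2 ⊆ dyadicBox d ℓ' jj' ∧ x ∈ dyadicBox d b.1 b.2}
      ≃ {f : Fin d → ℕ // ∑ i, f i = k} := by
    refine ⟨fun b => ⟨fun i => b.1.1 i - ℓ' i, ?_⟩,
           fun f => ⟨((fun i => ℓ' i + f.1 i), fun i => ⌊x i * 2 ^ (ℓ' i + f.1 i)⌋₊), ?_⟩, ?_, ?_⟩
    · obtain ⟨⟨ℓ, jj⟩, hsum, hjj, hsub, hxb⟩ := b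
      have hge := level_ge ℓ jj hsub hxb
      have : ∑ i, (ℓ i - ℓ' i) = ∑ i, ℓ i - ∑ i, ℓ' i := by
        rw [eq_tsub_iff_add_eq_of_le (Finset.sum_le_sum fun i _ => hge i),
          ← Finset.sum_add_distrib]
        exact Finset.sum_congr rfl fun i _ => by have := hge i; omega
      have hsum2 : ∑ i, ℓ i = m := hsum
      rw [this, hsum2, hsum']
      omega
    · obtain ⟨f, hf⟩ := f
      have key : ∀ i, ⌊x i * 2 ^ (ℓ' i + f i)⌋₊ < 2 ^ (ℓ' i + f i) ∧
          ((⌊x i * 2 ^ (ℓ' i + f i)⌋₊ : ℝ) / 2 ^ (ℓ' i + f i) ≤ x i ∧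
            x i < ((⌊x i * 2 ^ (ℓ' i + f i)⌋₊ : ℝ) + 1) / 2 ^ (ℓ' i + f i)) ∧
          (jj' i : ℝ) / 2 ^ ℓ' i ≤ (⌊x i * 2 ^ (ℓ' i + f i)⌋₊ : ℝ) / 2 ^ (ℓ' i + f i) ∧
          ((⌊x i * 2 ^ (ℓ' i + f i)⌋₊ : ℝ) + 1) / 2 ^ (ℓ' i + f i) ≤ ((jj' i : ℝ) + 1) / 2 ^ ℓ' i :=
        fun i => dyadic_floor_mem (hjj' i) (hx i).1 (hx i).2 (Nat.le_add_right _ _)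
      refine ⟨?_, fun i => (key i).1, ?_, fun i => (key i).2.1⟩
      · simp only [Finset.sum_add_distrib, hsum', hf]
        omega
      · intro y hy i
        have h1 := (key i).2.2.1
        have h2 := (key i).2.2.2
        exact ⟨le_trans h1 (hy i).1, lt_of_lt_of_le (hy i).2 h2⟩
    · rintro ⟨⟨ℓ, jj⟩, hsum, hjj, hsub, hxb⟩
      have hge := level_ge ℓ jj hsub hxb
      have hdet := jj_det ℓ jj hxb
      apply Subtype.ext
      refine Prod.ext (funext fun i => ?_) (funext fun i => ?_)
      · show ℓ' i + (ℓ i - ℓ' i) = ℓ i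
        have := hge i; omega
      · show ⌊x i * 2 ^ (ℓ' i + (ℓ i - ℓ' i))⌋₊ = jj i
        rw [show ℓ' i + (ℓ i - ℓ' i) = ℓ i from by have := hge i; omega]
        exact (hdet i).symm
    · rintro ⟨f, hf⟩
      apply Subtype.ext
      funext i
      show (ℓ' i + f i) - ℓ' i = f i
      omega
  rw [Nat.card_congr e]
  exact nat_sum_card d k hd
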